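/- Corollary 3.1: Under Assumption (K) on the kernel k, for each λ∈ℂ there exists a unique function t↦Φ(t,−λ), bounded and Borel measurable on [0,T] for every T>0, satisfying the Volterra equation of the second kind Φ(t,−λ)=1−λ∫_0^t k(t,s)Φ(s,−λ)ds for all t>0 and Φ(0,−λ)=1. This solution is given by the series Φ(t,−λ)=∑_{n=0}^∞ c_n(t)(−λ)^n, which converges absolutely for every λ∈ℂ (so that Φ(t,·) is an entire function for each t≥0), and Φ(t,−λ)→1 as t↓0 uniformly in λ on every compact subset of ℂ. -/

import Mathlib

open MeasureTheory Filter

noncomputable section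

def AssumptionK (k : ℝ → ℝ → ℝ) : Prop :=
  Measurable (Function.uncurry k) ∧
  ∃ α ε : ℝ, 0 ≤ α ∧ α < 1 ∧ 0 < ε ∧
    ∀ T : ℝ, 0 < T → ∃ KT : ℝ,
      ∀ t : ℝ, 0 < t → t ≤ T →
        MeasureTheory.IntegrableOn (fun s => |k t s| ^ (1 + ε)) (Set.Ioc 0 t) ∧
        t ^ (α - 1 / (1 + ε)) *
          (∫ s in Set.Ioc (0:ℝ) t, |k t s| ^ (1 + ε)) ^ (1 / (1 + ε)) ≤ KT

noncomputable def Rop (k : ℝ → ℝ → ℝ) (lam : ℂ) (g : ℝ → ℂ) : ℝ → ℂ :=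
  fun t => if 0 < t then 1 - lam * ∫ s in Set.Ioc (0:ℝ) t, (k t s : ℂ) * g s else 1

def BddBorelOn (T : ℝ) (g : ℝ → ℂ) : Prop :=
  Measurable g ∧ ∃ M : ℝ, ∀ t ∈ Set.Icc (0:ℝ) T, ‖g t‖ ≤ M

noncomputable def coeff (k : ℝ → ℝ → ℝ) : ℕ → ℝ → ℝ
  | 0, _ => 1
  | n + 1, t => if 0 < t then ∫ s in Set.Ioc (0:ℝ) t, k t s * coeff k n s else 0

noncomputable def Phi (k : ℝ → ℝ → ℝ) (t : ℝ) (l : ℂ) : ℂ :=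
  ∑' n : ℕ, (coeff k n t : ℂ) * l ^ n

noncomputable def PhiR (k : ℝ → ℝ → ℝ) (t : ℝ) (x : ℝ) : ℝ :=
  ∑' n : ℕ, coeff k n t * x ^ n

namespace VolterraAux


/-- The recursive constant sequence controlling the iterated kernel bounds. -/
def Cs (K cq q : ℝ) : ℕ → ℝ
  | 0 => 1
  | n+1 => K * Cs K cq q n / ((n : ℝ) * cq + 1) ^ (1/q)

variable {K cq q r : ℝ}

lemma D_pos (hcq : 0 < cq) (n : ℕ) : (0:ℝ) < ((n : ℝ) * cq + 1) ^ (1/q) := by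
  apply Real.rpow_pos_of_pos; positivity

lemma Cs_pos (hK : 0 < K) (hcq : 0 < cq) : ∀ n, 0 < Cs K cq q n
  | 0 => one_pos
  | n+1 => div_pos (mul_pos hK (Cs_pos hK hcq n)) (D_pos hcq n)

lemma Cs_summable (hK : 0 < K) (hcq : 0 < cq) (hq : 0 < q) (hr : 0 < r) :
    Summable fun n => Cs K cq q n * r ^ n := by
  have hpos : ∀ n, 0 < Cs K cq q n * r ^ n := fun n =>
    mul_pos (Cs_pos hK hcq n) (pow_pos hr n)
  apply summable_of_ratio_test_tendsto_lt_one (l := 0) one_pos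
    (Eventually.of_forall fun n => (hpos n).ne')
  have hratio : ∀ n : ℕ, ‖Cs K cq q (n+1) * r ^ (n+1)‖ / ‖Cs K cq q n * r ^ n‖
      = K * r / ((n : ℝ) * cq + 1) ^ (1/q) := by
    intro n
    rw [Real.norm_of_nonneg (hpos (n+1)).le, Real.norm_of_nonneg (hpos n).le]
    show K * Cs K cq q n / ((n : ℝ) * cq + 1) ^ (1/q) * r ^ (n+1) / _ = _
    rw [pow_succ]
    field_simp [(Cs_pos hK hcq n).ne', (pow_pos hr n).ne', (D_pos hcq n).ne']
  simp only [hratio]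
  apply Tendsto.div_atTop (tendsto_const_nhds)
  apply (tendsto_rpow_atTop (by positivity : 0 < 1/q)).comp
  apply tendsto_atTop_add_const_right
  exact (tendsto_natCast_atTop_atTop (R := ℝ)).atTop_mul_const hcq

lemma Cs_summable' (hK : 0 < K) (hcq : 0 < cq) (hq : 0 < q) (hr : 0 ≤ r) :
    Summable fun n => Cs K cq q n * r ^ n := by
  refine Summable.of_nonneg_of_le
    (fun n => mul_nonneg (Cs_pos hK hcq n).le (pow_nonneg hr n))
    (fun n => ?_) (Cs_summable hK hcq hq (by linarith : (0:ℝ) < r + 1))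
  exact mul_le_mul_of_nonneg_left (pow_le_pow_left₀ hr (by linarith) n) (Cs_pos hK hcq n).le

lemma Cs_tendsto (hK : 0 < K) (hcq : 0 < cq) (hq : 0 < q) (hr : 0 ≤ r) :
    Tendsto (fun n => Cs K cq q n * r ^ n) atTop (nhds 0) :=
  (Cs_summable' hK hcq hq hr).tendsto_atTop_zero

section Kernel

variable {k : ℝ → ℝ → ℝ} {α ε : ℝ}

lemma coeff_succ (n : ℕ) (t : ℝ) :
    coeff k (n+1) t = if 0 < t then ∫ s in Set.Ioc (0:ℝ) t, k t s * coeff k n s else 0 := rfl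

lemma coeff_nonpos {t : ℝ} (ht : ¬ 0 < t) {n : ℕ} (hn : n ≠ 0) : coeff k n t = 0 := by
  obtain ⟨m, rfl⟩ := Nat.exists_eq_succ_of_ne_zero hn
  rw [coeff_succ, if_neg ht]

lemma kt_measurable (hm : Measurable (Function.uncurry k)) (t : ℝ) :
    Measurable (fun s => k t s) :=
  hm.comp measurable_prodMk_left

lemma coeff_measurable (hm : Measurable (Function.uncurry k)) :
    ∀ n, Measurable (coeff k n) := by
  intro n
  induction n with
  | zero => exact measurable_const
  | succ n ih =>
    have hS : MeasurableSet {p : ℝ × ℝ | p.2 ∈ Set.Ioc 0 p.1} := by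
      apply MeasurableSet.inter
      · exact measurableSet_lt measurable_const measurable_snd
      · exact measurableSet_le measurable_snd measurable_fst
    have hF : Measurable fun p : ℝ × ℝ =>
        Set.indicator {p : ℝ × ℝ | p.2 ∈ Set.Ioc 0 p.1} (fun p => k p.1 p.2 * coeff k n p.2) p :=
      (Measurable.indicator (hm.mul (ih.comp measurable_snd)) hS)
    have hInt : Measurable fun t => ∫ s,
        Set.indicator {p : ℝ × ℝ | p.2 ∈ Set.Ioc 0 p.1} (fun p => k p.1 p.2 * coeff k n p.2)
          (t, s) := by
      exact (hF.stronglyMeasurable.integral_prod_right').measurable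
    have : ∀ t : ℝ, coeff k (n+1) t = if 0 < t then (∫ s,
        Set.indicator {p : ℝ × ℝ | p.2 ∈ Set.Ioc 0 p.1} (fun p => k p.1 p.2 * coeff k n p.2)
          (t, s)) else 0 := by
      intro t
      rw [coeff_succ]
      by_cases ht : 0 < t
      · rw [if_pos ht, if_pos ht]
        rw [← integral_indicator measurableSet_Ioc]
        congr 1
      · rw [if_neg ht, if_neg ht]
    rw [show coeff k (n+1) = _ from funext this]
    exact Measurable.ite (measurableSet_lt measurable_const measurable_id) hInt measurable_const

lemma keybound (hm : Measurable (Function.uncurry k)) (hε : 0 < ε)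
    {t K A β : ℝ} (ht : 0 < t) (hA : 0 ≤ A) (hβ : 0 ≤ β)
    (hint : MeasureTheory.IntegrableOn (fun s => |k t s| ^ (1+ε)) (Set.Ioc 0 t))
    (hKt : t ^ (α - 1/(1+ε)) * (∫ s in Set.Ioc (0:ℝ) t, |k t s| ^ (1+ε)) ^ (1/(1+ε)) ≤ K)
    {φ : ℝ → ℝ} (hφm : Measurable φ) (hφ : ∀ s ∈ Set.Ioc (0:ℝ) t, |φ s| ≤ A * s ^ β) :
    ∫ s in Set.Ioc (0:ℝ) t, |k t s| * |φ s| ≤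
      K * A * t ^ (β + (1 - α)) / (β * ((1+ε)/ε) + 1) ^ (1/((1+ε)/ε)) := by
  set p : ℝ := 1 + ε with hp_def
  set q : ℝ := (1+ε)/ε with hq_def
  have hp1 : 1 < p := by simp [hp_def]; linarith
  have hp0 : 0 < p := by linarith
  have hq0 : 0 < q := by positivity
  have hpq : p.HolderConjugate q := by
    refine Real.holderConjugate_iff.mpr ⟨?_, ?_⟩
    · exact hp1
    · rw [hq_def, hp_def]
      rw [inv_div]
      field_simp
  have hinv : 1/p + 1/q = 1 := by
    rw [one_div, one_div]; exact hpq.inv_add_inv_eq_one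
  set μ : Measure ℝ := volume.restrict (Set.Ioc (0:ℝ) t) with hμ_def
  haveI : IsFiniteMeasure μ := by
    constructor
    rw [hμ_def, Measure.restrict_apply_univ]
    exact measure_Ioc_lt_top
  have hkabs : Measurable fun s => |k t s| := (kt_measurable hm t).abs
  -- Memℒp of |k t ·|
  have hkLp : MemLp (fun s => |k t s|) (ENNReal.ofReal p) μ := by
    have h0 : ENNReal.ofReal p ≠ 0 := by
      simp [ENNReal.ofReal_eq_zero, not_le]; linarith
    have htop : ENNReal.ofReal p ≠ ⊤ := ENNReal.ofReal_ne_top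
    have := (memLp_norm_rpow_iff (μ := μ) (p := ENNReal.ofReal p) (q := ENNReal.ofReal p)
      hkabs.aestronglyMeasurable h0 htop)
    rw [ENNReal.div_self h0 htop] at this
    rw [← this, memLp_one_iff_integrable]
    have : (fun s => ‖|k t s|‖ ^ (ENNReal.ofReal p).toReal) = fun s => |k t s| ^ p := by
      funext s
      rw [Real.norm_eq_abs, abs_abs, ENNReal.toReal_ofReal hp0.le]
    rw [this]
    exact hint
  -- integrability of the comparison function to the power q
  have hIoc : ∀ s ∈ Set.Ioc (0:ℝ) t, (A * s ^ β) ^ q = A ^ q * s ^ (β*q) := by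
    intro s hs
    rw [Real.mul_rpow hA (Real.rpow_nonneg hs.1.le β), Real.rpow_mul hs.1.le]
  have hi0 : MeasureTheory.IntegrableOn (fun s => A ^ q * s ^ (β*q)) (Set.Ioc 0 t) := by
    have h1 : IntervalIntegrable (fun s : ℝ => s ^ (β*q)) volume 0 t :=
      intervalIntegral.intervalIntegrable_rpow' (by nlinarith)
    have := (intervalIntegrable_iff_integrableOn_Ioc_of_le ht.le).mp h1
    exact this.const_mul _
  have hi1 : MeasureTheory.IntegrableOn (fun s => (A * s ^ β) ^ q) (Set.Ioc 0 t) :=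
    hi0.congr_fun (fun s hs => (hIoc s hs).symm) measurableSet_Ioc
  have hbLp : MemLp (fun s => A * s ^ β) (ENNReal.ofReal q) μ := by
    have h0 : ENNReal.ofReal q ≠ 0 := by
      simp [ENNReal.ofReal_eq_zero, not_le]; linarith
    have htop : ENNReal.ofReal q ≠ ⊤ := ENNReal.ofReal_ne_top
    have hbm : Measurable fun s : ℝ => A * s ^ β :=
      ((Real.continuous_rpow_const hβ).measurable).const_mul A
    have := (memLp_norm_rpow_iff (μ := μ) (p := ENNReal.ofReal q) (q := ENNReal.ofReal q)
      hbm.aestronglyMeasurable h0 htop)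
    rw [ENNReal.div_self h0 htop] at this
    rw [← this, memLp_one_iff_integrable]
    apply Integrable.congr (hi1.mono_set (subset_refl _))
    filter_upwards [ae_restrict_mem measurableSet_Ioc] with s hs
    rw [Real.norm_eq_abs, ENNReal.toReal_ofReal hq0.le,
      abs_of_nonneg (mul_nonneg hA (Real.rpow_nonneg hs.1.le β))]
  have hφLp : MemLp (fun s => |φ s|) (ENNReal.ofReal q) μ := by
    apply hbLp.of_le hφm.abs.aestronglyMeasurable
    filter_upwards [ae_restrict_mem measurableSet_Ioc] with s hs
    rw [Real.norm_eq_abs, Real.norm_eq_abs, abs_abs]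
    exact (hφ s hs).trans (le_abs_self _)
  have H := integral_mul_le_Lp_mul_Lq_of_nonneg (μ := μ) hpq
    (Eventually.of_forall fun s => abs_nonneg (k t s))
    (Eventually.of_forall fun s => abs_nonneg (φ s)) hkLp hφLp
  -- first factor
  have hIk : (0:ℝ) ≤ ∫ s, |k t s| ^ p ∂μ :=
    integral_nonneg fun s => Real.rpow_nonneg (abs_nonneg _) p
  have hX0 : (0:ℝ) ≤ (∫ s, |k t s| ^ p ∂μ) ^ (1/p) := Real.rpow_nonneg hIk _
  have hK0 : 0 ≤ K := by
    refine le_trans ?_ hKt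
    positivity
  have hA1 : (∫ s, |k t s| ^ p ∂μ) ^ (1/p) ≤ K * t ^ (1/p - α) := by
    have h2 : t ^ (1/p - α) * (t ^ (α - 1/p) * (∫ s, |k t s| ^ p ∂μ) ^ (1/p))
        ≤ t ^ (1/p - α) * K := by
      apply mul_le_mul_of_nonneg_left hKt (Real.rpow_nonneg ht.le _)
    rw [← mul_assoc, ← Real.rpow_add ht] at h2
    simp only [sub_add_sub_cancel', sub_self, Real.rpow_zero, one_mul] at h2
    linarith [h2]
  -- second factor
  have hq0' : (0:ℝ) < β * q + 1 := by positivity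
  have hiq : ∫ s in Set.Ioc (0:ℝ) t, s ^ (β*q) = t ^ (β*q+1) / (β*q+1) := by
    rw [← intervalIntegral.integral_of_le ht.le,
      integral_rpow (Or.inl (by nlinarith : (-1:ℝ) < β*q))]
    rw [Real.zero_rpow hq0'.ne']
    ring
  have hA2 : ∫ s, |φ s| ^ q ∂μ ≤ A ^ q * (t ^ (β*q+1) / (β*q+1)) := by
    have hle : ∀ᵐ s ∂μ, |φ s| ^ q ≤ (A * s ^ β) ^ q := by
      filter_upwards [ae_restrict_mem measurableSet_Ioc] with s hs
      exact Real.rpow_le_rpow (abs_nonneg _) (hφ s hs) hq0.le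
    have := integral_mono_of_nonneg
      (Eventually.of_forall fun s => Real.rpow_nonneg (abs_nonneg _) q) hi1 hle
    refine this.trans ?_
    have : ∫ s, (A * s ^ β) ^ q ∂μ = ∫ s in Set.Ioc (0:ℝ) t, A ^ q * s ^ (β*q) :=
      setIntegral_congr_fun measurableSet_Ioc (fun s hs => hIoc s hs)
    rw [this, MeasureTheory.integral_const_mul, hiq]
  have hIφ : (0:ℝ) ≤ ∫ s, |φ s| ^ q ∂μ :=
    integral_nonneg fun s => Real.rpow_nonneg (abs_nonneg _) q
  have hA3 : (∫ s, |φ s| ^ q ∂μ) ^ (1/q)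
      ≤ A * t ^ (β + 1/q) / (β*q+1) ^ (1/q) := by
    have h1 : (∫ s, |φ s| ^ q ∂μ) ^ (1/q) ≤ (A ^ q * (t ^ (β*q+1) / (β*q+1))) ^ (1/q) :=
      Real.rpow_le_rpow hIφ hA2 (by positivity)
    refine h1.trans_eq ?_
    rw [Real.mul_rpow (Real.rpow_nonneg hA q)
        (by positivity : (0:ℝ) ≤ t ^ (β*q+1) / (β*q+1)),
      Real.div_rpow (Real.rpow_nonneg ht.le _) hq0'.le,
      ← Real.rpow_mul hA, mul_one_div_cancel hq0.ne', Real.rpow_one,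
      ← Real.rpow_mul ht.le]
    rw [show (β*q+1) * (1/q) = β + 1/q by field_simp]
    ring
  -- combine
  refine H.trans ?_
  have hcomb : (∫ s, |k t s| ^ p ∂μ) ^ (1/p) * (∫ s, |φ s| ^ q ∂μ) ^ (1/q)
      ≤ (K * t ^ (1/p - α)) * (A * t ^ (β + 1/q) / (β*q+1) ^ (1/q)) := by
    apply mul_le_mul hA1 hA3 (Real.rpow_nonneg hIφ _) (by positivity)
  refine hcomb.trans_eq ?_
  rw [show K * t ^ (1/p - α) * (A * t ^ (β + 1/q) / (β*q+1) ^ (1/q))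
      = K * A * (t ^ (1/p - α) * t ^ (β + 1/q)) / (β*q+1) ^ (1/q) by ring,
    ← Real.rpow_add ht]
  rw [show 1/p - α + (β + 1/q) = β + (1 - α) by linarith [hinv]]


lemma Cs_nonneg {K cq q : ℝ} (hK : 0 ≤ K) (hcq : 0 < cq) : ∀ n, 0 ≤ Cs K cq q n
  | 0 => zero_le_one
  | n+1 => div_nonneg (mul_nonneg hK (Cs_nonneg hK hcq n)) (D_pos hcq n).le

lemma coeff_bound (hm : Measurable (Function.uncurry k)) (hα1 : α < 1) (hε : 0 < ε)
    {T K : ℝ} (hT : 0 < T)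
    (h : ∀ t : ℝ, 0 < t → t ≤ T →
      MeasureTheory.IntegrableOn (fun s => |k t s| ^ (1 + ε)) (Set.Ioc 0 t) ∧
      t ^ (α - 1 / (1 + ε)) * (∫ s in Set.Ioc (0:ℝ) t, |k t s| ^ (1 + ε)) ^ (1 / (1 + ε)) ≤ K) :
    ∀ n, ∀ t : ℝ, 0 < t → t ≤ T →
      |coeff k n t| ≤ Cs K ((1-α)*((1+ε)/ε)) ((1+ε)/ε) n * t ^ ((n:ℝ)*(1-α)) := by
  have hc : (0:ℝ) < 1 - α := by linarith
  have hq0 : (0:ℝ) < (1+ε)/ε := by positivity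
  have hcq : (0:ℝ) < (1-α)*((1+ε)/ε) := by positivity
  have hK0 : 0 ≤ K := by
    refine le_trans ?_ (h T hT le_rfl).2
    positivity
  intro n
  induction n with
  | zero =>
    intro t ht htT
    simp only [coeff, Cs, Nat.cast_zero, zero_mul, Real.rpow_zero, mul_one, abs_one, le_refl]
  | succ n ih =>
    intro t ht htT
    have hφ : ∀ s ∈ Set.Ioc (0:ℝ) t, |coeff k n s| ≤
        Cs K ((1-α)*((1+ε)/ε)) ((1+ε)/ε) n * s ^ ((n:ℝ)*(1-α)) :=
      fun s hs => ih s hs.1 (hs.2.trans htT)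
    have hkb := keybound hm hε ht (Cs_nonneg hK0 hcq n) (by positivity : (0:ℝ) ≤ (n:ℝ)*(1-α))
      (h t ht htT).1 (h t ht htT).2 (coeff_measurable hm n) hφ
    rw [coeff_succ, if_pos ht]
    calc |∫ s in Set.Ioc (0:ℝ) t, k t s * coeff k n s|
        ≤ ∫ s in Set.Ioc (0:ℝ) t, |k t s| * |coeff k n s| := by
          simpa using norm_integral_le_integral_norm
            (μ := volume.restrict (Set.Ioc (0:ℝ) t)) (fun s => k t s * coeff k n s)
      _ ≤ K * Cs K ((1-α)*((1+ε)/ε)) ((1+ε)/ε) n * t ^ ((n:ℝ)*(1-α) + (1 - α)) /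
            ((n:ℝ)*(1-α) * ((1+ε)/ε) + 1) ^ (1/((1+ε)/ε)) := hkb
      _ = Cs K ((1-α)*((1+ε)/ε)) ((1+ε)/ε) (n+1) * t ^ (((n:ℕ)+1:ℝ)*(1-α)) := by
          show _ = K * Cs K ((1-α)*((1+ε)/ε)) ((1+ε)/ε) n /
            ((n:ℝ) * ((1-α)*((1+ε)/ε)) + 1) ^ (1/((1+ε)/ε)) * _
          rw [show (n:ℝ)*(1-α) * ((1+ε)/ε) + 1 = (n:ℝ) * ((1-α)*((1+ε)/ε)) + 1 by ring,
            show (n:ℝ)*(1-α) + (1 - α) = ((n:ℕ)+1:ℝ)*(1-α) by push_cast; ring]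
          ring
      _ = Cs K ((1-α)*((1+ε)/ε)) ((1+ε)/ε) (n+1) * t ^ (((n+1:ℕ):ℝ)*(1-α)) := by
          norm_num

/-- Per-`T` kernel data. -/
def KH (k : ℝ → ℝ → ℝ) (α ε T K : ℝ) : Prop :=
  ∀ t : ℝ, 0 < t → t ≤ T →
    MeasureTheory.IntegrableOn (fun s => |k t s| ^ (1 + ε)) (Set.Ioc 0 t) ∧
    t ^ (α - 1 / (1 + ε)) * (∫ s in Set.Ioc (0:ℝ) t, |k t s| ^ (1 + ε)) ^ (1 / (1 + ε)) ≤ K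

lemma coeff_term_bound (hm : Measurable (Function.uncurry k)) (hα1 : α < 1) (hε : 0 < ε)
    {T K : ℝ} (hT : 0 < T) (h : KH k α ε T K)
    {t : ℝ} (ht : 0 < t) (htT : t ≤ T) (z : ℂ) (n : ℕ) :
    ‖(coeff k n t : ℂ) * z ^ n‖ ≤
      Cs K ((1-α)*((1+ε)/ε)) ((1+ε)/ε) n * (T ^ (1-α) * ‖z‖) ^ n := by
  have hc : (0:ℝ) < 1 - α := by linarith
  have hcb := coeff_bound hm hα1 hε hT h n t ht htT
  have hK0 : 0 ≤ K := by refine le_trans ?_ (h T hT le_rfl).2; positivity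
  have hCs := Cs_nonneg (cq := (1-α)*((1+ε)/ε)) (q := (1+ε)/ε) hK0 (by positivity) n
  rw [norm_mul, norm_pow, Complex.norm_real, Real.norm_eq_abs]
  have h1 : t ^ ((n:ℝ)*(1-α)) = (t ^ (1-α)) ^ n := by
    rw [mul_comm, Real.rpow_mul ht.le, Real.rpow_natCast]
  calc |coeff k n t| * ‖z‖ ^ n
      ≤ (Cs K ((1-α)*((1+ε)/ε)) ((1+ε)/ε) n * (t ^ (1-α)) ^ n) * ‖z‖ ^ n := by
        apply mul_le_mul_of_nonneg_right _ (pow_nonneg (norm_nonneg z) n)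
        rw [← h1]; exact hcb
    _ = Cs K ((1-α)*((1+ε)/ε)) ((1+ε)/ε) n * (t ^ (1-α) * ‖z‖) ^ n := by
        rw [mul_pow]; ring
    _ ≤ Cs K ((1-α)*((1+ε)/ε)) ((1+ε)/ε) n * (T ^ (1-α) * ‖z‖) ^ n := by
        apply mul_le_mul_of_nonneg_left _ hCs
        apply pow_le_pow_left₀ (by positivity)
        apply mul_le_mul_of_nonneg_right _ (norm_nonneg z)
        exact Real.rpow_le_rpow ht.le htT hc.le

lemma summable_norm_of_pos (hm : Measurable (Function.uncurry k)) (hα1 : α < 1) (hε : 0 < ε)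
    {T K : ℝ} (hT : 0 < T) (h : KH k α ε T K) (hK : 0 < K)
    {t : ℝ} (ht : 0 < t) (htT : t ≤ T) (z : ℂ) :
    Summable fun n : ℕ => ‖(coeff k n t : ℂ) * z ^ n‖ := by
  have hc : (0:ℝ) < 1 - α := by linarith
  refine Summable.of_nonneg_of_le (fun n => norm_nonneg _)
    (fun n => coeff_term_bound hm hα1 hε hT h ht htT z n) ?_
  exact Cs_summable' hK (by positivity) (by positivity) (by positivity)

lemma phi_nonpos {t : ℝ} (ht : ¬ 0 < t) (l : ℂ) : Phi k t l = 1 := by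
  rw [Phi, tsum_eq_single 0 (fun n hn => by rw [coeff_nonpos ht hn]; simp)]
  simp [coeff]

lemma summable_nonpos {t : ℝ} (ht : ¬ 0 < t) (z : ℂ) :
    Summable fun n : ℕ => ‖(coeff k n t : ℂ) * z ^ n‖ := by
  apply summable_of_ne_finset_zero (s := ({0} : Finset ℕ))
  intro n hn
  rw [coeff_nonpos ht (by simpa using hn)]
  simp

lemma k_memLp (hm : Measurable (Function.uncurry k)) (hε : 0 < ε)
    {t : ℝ} (ht : 0 < t)
    (hint : MeasureTheory.IntegrableOn (fun s => |k t s| ^ (1+ε)) (Set.Ioc 0 t)) :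
    MemLp (fun s => |k t s|) (ENNReal.ofReal (1+ε)) (volume.restrict (Set.Ioc (0:ℝ) t)) := by
  have hp0 : (0:ℝ) < 1 + ε := by linarith
  have h0 : ENNReal.ofReal (1+ε) ≠ 0 := by
    simp [ENNReal.ofReal_eq_zero, not_le]; linarith
  have htop : ENNReal.ofReal (1+ε) ≠ ⊤ := ENNReal.ofReal_ne_top
  have hkabs : Measurable fun s => |k t s| := (kt_measurable hm t).abs
  have hiff := (memLp_norm_rpow_iff (μ := volume.restrict (Set.Ioc (0:ℝ) t))
    (p := ENNReal.ofReal (1+ε)) (q := ENNReal.ofReal (1+ε))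
    hkabs.aestronglyMeasurable h0 htop)
  rw [ENNReal.div_self h0 htop] at hiff
  rw [← hiff, memLp_one_iff_integrable]
  have heq : (fun s => ‖|k t s|‖ ^ (ENNReal.ofReal (1+ε)).toReal) = fun s => |k t s| ^ (1+ε) := by
    funext s
    rw [Real.norm_eq_abs, abs_abs, ENNReal.toReal_ofReal hp0.le]
  rw [heq]
  exact hint

lemma k_abs_integrable (hm : Measurable (Function.uncurry k)) (hε : 0 < ε)
    {t : ℝ} (ht : 0 < t)
    (hint : MeasureTheory.IntegrableOn (fun s => |k t s| ^ (1+ε)) (Set.Ioc 0 t)) :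
    MeasureTheory.IntegrableOn (fun s => |k t s|) (Set.Ioc (0:ℝ) t) := by
  haveI : IsFiniteMeasure (volume.restrict (Set.Ioc (0:ℝ) t)) := by
    constructor
    rw [Measure.restrict_apply_univ]
    exact measure_Ioc_lt_top
  exact (k_memLp hm hε ht hint).integrable (by
    rw [ENNReal.one_le_ofReal]; linarith)

lemma measurable_phi (hm : Measurable (Function.uncurry k)) (hα1 : α < 1) (hε : 0 < ε)
    (hfam : ∀ T : ℝ, 0 < T → ∃ K : ℝ, KH k α ε T K) (z : ℂ) :
    Measurable fun t => Phi k t z := by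
  have hsumm : ∀ t : ℝ, Summable fun n : ℕ => (coeff k n t : ℂ) * z ^ n := by
    intro t
    by_cases ht : 0 < t
    · obtain ⟨K, hK⟩ := hfam t ht
      have hK' : KH k α ε t (K+1) := fun u h1 h2 =>
        ⟨(hK u h1 h2).1, (hK u h1 h2).2.trans (by linarith)⟩
      have hK0 : 0 ≤ K := by refine le_trans ?_ (hK t ht le_rfl).2; positivity
      exact Summable.of_norm
        (summable_norm_of_pos hm hα1 hε ht hK' (by linarith) ht le_rfl z)
    · exact Summable.of_norm (summable_nonpos ht z)
  apply measurable_of_tendsto_metrizable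
    (f := fun N t => ∑ n ∈ Finset.range N, (coeff k n t : ℂ) * z ^ n)
  · intro N
    apply Finset.measurable_sum
    intro n _
    exact (Complex.measurable_ofReal.comp (coeff_measurable hm n)).mul_const _
  · rw [tendsto_pi_nhds]
    intro t
    exact (hsumm t).hasSum.tendsto_sum_nat

lemma phi_eq (hm : Measurable (Function.uncurry k)) (hα1 : α < 1) (hε : 0 < ε)
    {t K : ℝ} (ht : 0 < t) (hK : KH k α ε t K) (hKpos : 0 < K) (lam : ℂ) :
    Phi k t (-lam) = 1 - lam * ∫ s in Set.Ioc (0:ℝ) t, (k t s : ℂ) * Phi k s (-lam) := by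
  have hc : (0:ℝ) < 1 - α := by linarith
  set cq : ℝ := (1-α)*((1+ε)/ε) with hcq_def
  set q : ℝ := (1+ε)/ε with hq_def
  have hcq0 : 0 < cq := by positivity
  have hq0 : 0 < q := by positivity
  set r : ℝ := t ^ (1-α) * ‖lam‖ with hr_def
  have hr0 : 0 ≤ r := by positivity
  have hsummb : Summable fun n => Cs K cq q n * r ^ n := Cs_summable' hKpos hcq0 hq0 hr0
  have hkint : MeasureTheory.IntegrableOn (fun s => |k t s|) (Set.Ioc (0:ℝ) t) :=
    k_abs_integrable hm hε ht (hK t ht le_rfl).1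
  have hHS : HasSum (fun n => ∫ s in Set.Ioc (0:ℝ) t, (k t s : ℂ) * ((coeff k n s : ℂ) * (-lam) ^ n))
      (∫ s in Set.Ioc (0:ℝ) t, (k t s : ℂ) * Phi k s (-lam)) := by
    apply hasSum_integral_of_dominated_convergence
      (fun n s => |k t s| * (Cs K cq q n * r ^ n))
    · intro n
      exact ((Complex.measurable_ofReal.comp (kt_measurable hm t)).mul
        ((Complex.measurable_ofReal.comp (coeff_measurable hm n)).mul_const
          _)).aestronglyMeasurable
    · intro n
      filter_upwards [ae_restrict_mem measurableSet_Ioc] with s hs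
      rw [norm_mul, Complex.norm_real, Real.norm_eq_abs]
      apply mul_le_mul_of_nonneg_left _ (abs_nonneg _)
      have := coeff_term_bound hm hα1 hε ht hK hs.1 hs.2 (-lam) n
      rwa [norm_neg] at this
    · exact Eventually.of_forall fun s => hsummb.mul_left _
    · simp only [tsum_mul_left]
      exact hkint.mul_const _
    · filter_upwards [ae_restrict_mem measurableSet_Ioc] with s hs
      apply HasSum.mul_left
      apply Summable.hasSum
      exact Summable.of_norm (summable_norm_of_pos hm hα1 hε ht hK hKpos hs.1 hs.2 (-lam))
  have hstep : ∀ n : ℕ, (∫ s in Set.Ioc (0:ℝ) t, (k t s : ℂ) * ((coeff k n s : ℂ) * (-lam) ^ n))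
      = ((coeff k (n+1) t : ℝ) : ℂ) * (-lam) ^ n := by
    intro n
    have h1 : ∀ s : ℝ, (k t s : ℂ) * ((coeff k n s : ℂ) * (-lam) ^ n)
        = ((k t s * coeff k n s : ℝ) : ℂ) * (-lam) ^ n := by
      intro s; push_cast; ring
    simp only [h1]
    rw [MeasureTheory.integral_mul_const, coeff_succ, if_pos ht]
    congr 1
    exact integral_ofReal
  simp only [hstep] at hHS
  have hsum : Summable fun n : ℕ => (coeff k n t : ℂ) * (-lam) ^ n :=
    Summable.of_norm (summable_norm_of_pos hm hα1 hε ht hK hKpos ht le_rfl (-lam))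
  have h0 : Phi k t (-lam)
      = 1 + ∑' n : ℕ, ((coeff k (n+1) t : ℝ) : ℂ) * (-lam) ^ (n+1) := by
    rw [Phi, Summable.tsum_eq_zero_add hsum]
    norm_num [coeff]
  rw [h0]
  have h2 : ∀ n : ℕ, ((coeff k (n+1) t : ℝ) : ℂ) * (-lam) ^ (n+1)
      = (-lam) * (((coeff k (n+1) t : ℝ) : ℂ) * (-lam) ^ n) := by
    intro n; rw [pow_succ]; ring
  simp only [h2]
  rw [tsum_mul_left, hHS.tsum_eq]
  ring

lemma phi_norm_le (hm : Measurable (Function.uncurry k)) (hα1 : α < 1) (hε : 0 < ε)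
    {T K : ℝ} (hT : 0 < T) (h : KH k α ε T K) (hKpos : 0 < K) (z : ℂ)
    {t : ℝ} (ht : 0 < t) (htT : t ≤ T) :
    ‖Phi k t z‖ ≤ ∑' n, Cs K ((1-α)*((1+ε)/ε)) ((1+ε)/ε) n * (T ^ (1-α) * ‖z‖) ^ n := by
  have hc : (0:ℝ) < 1 - α := by linarith
  have hsn := summable_norm_of_pos hm hα1 hε hT h hKpos ht htT z
  refine (norm_tsum_le_tsum_norm hsn).trans ?_
  refine Summable.tsum_le_tsum (fun n => coeff_term_bound hm hα1 hε hT h ht htT z n) hsn ?_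
  exact Cs_summable' hKpos (by positivity) (by positivity) (by positivity)

lemma integrable_mul_bdd (hm : Measurable (Function.uncurry k))
    {t : ℝ} (hkint : MeasureTheory.IntegrableOn (fun s => |k t s|) (Set.Ioc (0:ℝ) t))
    {g : ℝ → ℂ} (hgm : Measurable g) {M : ℝ}
    (hMg : ∀ u ∈ Set.Ioc (0:ℝ) t, ‖g u‖ ≤ M) :
    MeasureTheory.IntegrableOn (fun u => (k t u : ℂ) * g u) (Set.Ioc (0:ℝ) t) := by
  apply Integrable.mono (hkint.mul_const M)
    ((Complex.measurable_ofReal.comp (kt_measurable hm t)).mul hgm).aestronglyMeasurable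
  filter_upwards [ae_restrict_mem measurableSet_Ioc] with u hu
  simp only [Pi.mul_apply, Function.comp_apply, norm_mul, Complex.norm_real, Real.norm_eq_abs]
  refine le_trans (mul_le_mul_of_nonneg_left (hMg u hu) (abs_nonneg _)) ?_
  rw [abs_abs]
  exact mul_le_mul_of_nonneg_left (le_abs_self M) (abs_nonneg _)

lemma unique_aux (hm : Measurable (Function.uncurry k)) (hα1 : α < 1) (hε : 0 < ε)
    {t K : ℝ} (ht : 0 < t) (hK : KH k α ε t K) (hKpos : 0 < K) (lam : ℂ)
    {g : ℝ → ℂ} (hgm : Measurable g) (hPm : Measurable fun s => Phi k s (-lam))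
    {M : ℝ} (hM : ∀ s ∈ Set.Icc (0:ℝ) t, ‖g s - Phi k s (-lam)‖ ≤ M)
    {Mg : ℝ} (hMg : ∀ u ∈ Set.Icc (0:ℝ) t, ‖g u‖ ≤ Mg)
    {MP : ℝ} (hMP : ∀ u ∈ Set.Icc (0:ℝ) t, ‖Phi k u (-lam)‖ ≤ MP)
    (hgeq : ∀ s : ℝ, 0 < s → g s = 1 - lam * ∫ u in Set.Ioc (0:ℝ) s, (k s u : ℂ) * g u) :
    g t = Phi k t (-lam) := by
  have hc : (0:ℝ) < 1 - α := by linarith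
  set cq : ℝ := (1-α)*((1+ε)/ε) with hcq_def
  set q : ℝ := (1+ε)/ε with hq_def
  have hcq0 : 0 < cq := by positivity
  have hq0 : 0 < q := by positivity
  have hM0 : 0 ≤ M := le_trans (norm_nonneg _) (hM t ⟨ht.le, le_rfl⟩)
  set d : ℝ → ℂ := fun s => g s - Phi k s (-lam) with hd_def
  have hdm : Measurable d := hgm.sub hPm
  -- the inductive bound
  have main : ∀ n : ℕ, ∀ s : ℝ, 0 < s → s ≤ t →
      ‖d s‖ ≤ M * (Cs K cq q n * ‖lam‖ ^ n) * s ^ ((n:ℝ)*(1-α)) := by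
    intro n
    induction n with
    | zero =>
      intro s hs hst
      simpa [Cs] using hM s ⟨hs.le, hst⟩
    | succ n ih =>
      intro s hs hst
      have hKs : KH k α ε s K := fun u h1 h2 => hK u h1 (h2.trans hst)
      have hkints : MeasureTheory.IntegrableOn (fun u => |k s u|) (Set.Ioc (0:ℝ) s) :=
        k_abs_integrable hm hε hs (hKs s hs le_rfl).1
      have hintg : MeasureTheory.IntegrableOn (fun u => (k s u : ℂ) * g u) (Set.Ioc (0:ℝ) s) :=
        integrable_mul_bdd hm hkints hgm
          (fun u hu => hMg u ⟨hu.1.le, hu.2.trans hst⟩)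
      have hintP : MeasureTheory.IntegrableOn (fun u => (k s u : ℂ) * Phi k u (-lam))
          (Set.Ioc (0:ℝ) s) :=
        integrable_mul_bdd hm hkints hPm
          (fun u hu => hMP u ⟨hu.1.le, hu.2.trans hst⟩)
      have hds : d s = (-lam) * ∫ u in Set.Ioc (0:ℝ) s, (k s u : ℂ) * d u := by
        rw [hd_def]
        simp only
        rw [hgeq s hs, phi_eq hm hα1 hε hs hKs hKpos lam]
        have : ∫ u in Set.Ioc (0:ℝ) s, (k s u : ℂ) * d u
            = (∫ u in Set.Ioc (0:ℝ) s, (k s u : ℂ) * g u)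
              - ∫ u in Set.Ioc (0:ℝ) s, (k s u : ℂ) * Phi k u (-lam) := by
          rw [← MeasureTheory.integral_sub hintg hintP]
          apply setIntegral_congr_fun measurableSet_Ioc
          intro u _
          simp only [hd_def]
          ring
        rw [this]
        ring
      have hφbound : ∀ u ∈ Set.Ioc (0:ℝ) s, |‖d u‖| ≤
          (M * (Cs K cq q n * ‖lam‖ ^ n)) * u ^ ((n:ℝ)*(1-α)) := by
        intro u hu
        rw [abs_norm]
        exact ih u hu.1 (hu.2.trans hst)
      have hkb := keybound hm hε hs
        (mul_nonneg hM0 (mul_nonneg (Cs_nonneg hKpos.le hcq0 n)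
          (pow_nonneg (norm_nonneg lam) n)))
        (by positivity : (0:ℝ) ≤ (n:ℝ)*(1-α))
        (hKs s hs le_rfl).1 (hKs s hs le_rfl).2 hdm.norm hφbound
      calc ‖d s‖ = ‖lam‖ * ‖∫ u in Set.Ioc (0:ℝ) s, (k s u : ℂ) * d u‖ := by
            rw [hds, norm_mul, norm_neg]
        _ ≤ ‖lam‖ * ∫ u in Set.Ioc (0:ℝ) s, |k s u| * ‖d u‖ := by
            apply mul_le_mul_of_nonneg_left _ (norm_nonneg lam)
            refine le_trans (norm_integral_le_integral_norm _) (le_of_eq ?_)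
            apply setIntegral_congr_fun measurableSet_Ioc
            intro u _
            simp only [norm_mul, Complex.norm_real, Real.norm_eq_abs]
        _ ≤ ‖lam‖ * (K * (M * (Cs K cq q n * ‖lam‖ ^ n)) * s ^ ((n:ℝ)*(1-α) + (1 - α)) /
              ((n:ℝ)*(1-α) * ((1+ε)/ε) + 1) ^ (1/((1+ε)/ε))) := by
            apply mul_le_mul_of_nonneg_left _ (norm_nonneg lam)
            refine le_of_eq_of_le ?_ hkb
            apply setIntegral_congr_fun measurableSet_Ioc
            intro u _
            simp only [abs_norm]
        _ = M * (Cs K cq q (n+1) * ‖lam‖ ^ (n+1)) * s ^ (((n+1:ℕ):ℝ)*(1-α)) := by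
            show _ = M * (K * Cs K cq q n / ((n:ℝ) * cq + 1) ^ (1/q) * ‖lam‖ ^ (n+1)) * _
            rw [show (n:ℝ)*(1-α) * ((1+ε)/ε) + 1 = (n:ℝ) * cq + 1 by rw [hcq_def]; ring,
              show (n:ℝ)*(1-α) + (1 - α) = ((n+1:ℕ):ℝ)*(1-α) by push_cast; ring,
              pow_succ]
            rw [hq_def]
            ring
  -- conclude
  have hr0 : (0:ℝ) ≤ ‖lam‖ * t ^ (1-α) := by positivity
  have htnd : Tendsto (fun n : ℕ => M * (Cs K cq q n * (‖lam‖ * t ^ (1-α)) ^ n))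
      atTop (nhds 0) := by
    have := (Cs_tendsto hKpos hcq0 hq0 hr0).const_mul M
    simpa using this
  have hle : ∀ n : ℕ, ‖d t‖ ≤ M * (Cs K cq q n * (‖lam‖ * t ^ (1-α)) ^ n) := by
    intro n
    have := main n t ht le_rfl
    refine this.trans (le_of_eq ?_)
    rw [mul_pow, show t ^ ((n:ℝ)*(1-α)) = (t ^ (1-α)) ^ n by
      rw [mul_comm, Real.rpow_mul ht.le, Real.rpow_natCast]]
    ring
  have : ‖d t‖ ≤ 0 := ge_of_tendsto htnd (Eventually.of_forall hle)
  have : d t = 0 := norm_le_zero_iff.mp this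
  rw [hd_def] at this
  exact sub_eq_zero.mp this

set_option maxHeartbeats 1000000 in
lemma unif_conv (hm : Measurable (Function.uncurry k)) (hα1 : α < 1) (hε : 0 < ε)
    {K : ℝ} (hK : KH k α ε 1 K) (hKpos : 0 < K) {R : ℝ} (hR : 0 < R) :
    TendstoUniformlyOn (fun (t : ℝ) (z : ℂ) => Phi k t (-z)) (fun _ => 1)
      (nhdsWithin 0 (Set.Ioi 0)) (Metric.closedBall 0 R) := by
  have hc : (0:ℝ) < 1 - α := by linarith
  set cq : ℝ := (1-α)*((1+ε)/ε) with hcq_def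
  set q : ℝ := (1+ε)/ε with hq_def
  have hcq0 : 0 < cq := by positivity
  have hq0 : 0 < q := by positivity
  have hsum1 : Summable fun n => Cs K cq q n * R ^ n := Cs_summable' hKpos hcq0 hq0 hR.le
  have hsumS : Summable fun n => Cs K cq q (n+1) * R ^ (n+1) :=
    (summable_nat_add_iff 1).mpr hsum1
  set S : ℝ := ∑' n, Cs K cq q (n+1) * R ^ (n+1) with hS_def
  have hS0 : 0 ≤ S :=
    tsum_nonneg fun n => mul_nonneg (Cs_nonneg hKpos.le hcq0 _) (pow_nonneg hR.le _)
  -- main estimate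
  have hmain : ∀ t : ℝ, 0 < t → t ≤ 1 → ∀ z : ℂ, ‖z‖ ≤ R →
      ‖Phi k t (-z) - 1‖ ≤ t ^ (1-α) * S := by
    intro t ht ht1 z hz
    have hsn := summable_norm_of_pos hm hα1 hε one_pos hK hKpos ht ht1 (-z)
    have hsum : Summable fun n : ℕ => (coeff k n t : ℂ) * (-z) ^ n := Summable.of_norm hsn
    have h0 : Phi k t (-z) - 1 = ∑' n : ℕ, ((coeff k (n+1) t : ℝ) : ℂ) * (-z) ^ (n+1) := by
      rw [Phi, Summable.tsum_eq_zero_add hsum]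
      norm_num [coeff]
    rw [h0]
    have hsn1 : Summable fun n : ℕ => ‖((coeff k (n+1) t : ℝ) : ℂ) * (-z) ^ (n+1)‖ :=
      (summable_nat_add_iff 1).mpr hsn
    refine (norm_tsum_le_tsum_norm hsn1).trans ?_
    have hterm : ∀ n : ℕ, ‖((coeff k (n+1) t : ℝ) : ℂ) * (-z) ^ (n+1)‖
        ≤ t ^ (1-α) * (Cs K cq q (n+1) * R ^ (n+1)) := by
      intro n
      rw [norm_mul, norm_pow, norm_neg, Complex.norm_real, Real.norm_eq_abs]
      have hcb := coeff_bound hm hα1 hε one_pos hK (n+1) t ht ht1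
      have h1 : t ^ (((n+1:ℕ)):ℝ) ≠ 0 := by positivity
      have h2 : t ^ ((((n+1:ℕ)):ℝ)*(1-α)) ≤ t ^ (1-α) := by
        rw [show t ^ ((((n+1:ℕ)):ℝ)*(1-α)) = (t ^ (1-α)) ^ (n+1) by
          rw [mul_comm, Real.rpow_mul ht.le, Real.rpow_natCast]]
        apply pow_le_of_le_one (Real.rpow_nonneg ht.le _) _ (Nat.succ_ne_zero n)
        exact Real.rpow_le_one ht.le ht1 hc.le
      calc |coeff k (n+1) t| * ‖z‖ ^ (n+1)
          ≤ (Cs K cq q (n+1) * t ^ ((((n+1:ℕ)):ℝ)*(1-α))) * R ^ (n+1) := by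
            apply mul_le_mul hcb (pow_le_pow_left₀ (norm_nonneg z) hz (n+1))
              (pow_nonneg (norm_nonneg z) _)
            exact mul_nonneg (Cs_nonneg hKpos.le hcq0 _) (Real.rpow_nonneg ht.le _)
        _ ≤ (Cs K cq q (n+1) * t ^ (1-α)) * R ^ (n+1) := by
            apply mul_le_mul_of_nonneg_right _ (pow_nonneg hR.le _)
            exact mul_le_mul_of_nonneg_left h2 (Cs_nonneg hKpos.le hcq0 _)
        _ = t ^ (1-α) * (Cs K cq q (n+1) * R ^ (n+1)) := by ring
    refine (Summable.tsum_le_tsum hterm hsn1 (hsumS.mul_left _)).trans ?_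
    rw [tsum_mul_left]
  -- conclude
  rw [Metric.tendstoUniformlyOn_iff]
  intro δ hδ
  have hS1 : (0:ℝ) < S + 1 := by linarith
  set c1 : ℝ := min 1 ((δ/(S+1)) ^ (1/(1-α))) with hc1_def
  have hc1 : 0 < c1 := lt_min one_pos (Real.rpow_pos_of_pos (div_pos hδ hS1) _)
  filter_upwards [Ioo_mem_nhdsGT_of_mem (Set.mem_Ico.mpr ⟨le_rfl, hc1⟩)] with t htc
  intro z hz
  rw [dist_comm, dist_eq_norm]
  have hz' : ‖z‖ ≤ R := mem_closedBall_zero_iff.mp hz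
  have ht0 : 0 < t := htc.1
  have ht1 : t ≤ 1 := le_trans htc.2.le (min_le_left _ _)
  refine lt_of_le_of_lt (hmain t ht0 ht1 z hz') ?_
  have htr : t ^ (1-α) < δ/(S+1) := by
    have h1 : t ^ (1-α) < ((δ/(S+1)) ^ (1/(1-α))) ^ (1-α) :=
      Real.rpow_lt_rpow ht0.le (lt_of_lt_of_le htc.2 (min_le_right _ _)) hc
    rwa [← Real.rpow_mul (div_pos hδ hS1).le, one_div_mul_cancel hc.ne', Real.rpow_one] at h1
  calc t ^ (1-α) * S ≤ (δ/(S+1)) * S := mul_le_mul_of_nonneg_right htr.le hS0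
    _ < (δ/(S+1)) * (S+1) := mul_lt_mul_of_pos_left (lt_add_one S) (div_pos hδ hS1)
    _ = δ := div_mul_cancel₀ δ hS1.ne'

end Kernel

end VolterraAux

theorem stmt4 (k : ℝ → ℝ → ℝ) (hk : AssumptionK k) (lam : ℂ) :
    (∀ T : ℝ, 0 < T → BddBorelOn T (fun t => Phi k t (-lam))) ∧
    Phi k 0 (-lam) = 1 ∧
    (∀ t : ℝ, 0 < t →
      Phi k t (-lam) = 1 - lam * ∫ s in Set.Ioc (0:ℝ) t, (k t s : ℂ) * Phi k s (-lam)) ∧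
    (∀ g : ℝ → ℂ, (∀ T : ℝ, 0 < T → BddBorelOn T g) → g 0 = 1 →
      (∀ t : ℝ, 0 < t → g t = 1 - lam * ∫ s in Set.Ioc (0:ℝ) t, (k t s : ℂ) * g s) →
      ∀ t : ℝ, 0 ≤ t → g t = Phi k t (-lam)) ∧
    (∀ t : ℝ, 0 ≤ t → ∀ z : ℂ, Summable (fun n : ℕ => ‖(coeff k n t : ℂ) * z ^ n‖)) ∧
    (∀ R : ℝ, 0 < R →
      TendstoUniformlyOn (fun (t : ℝ) (z : ℂ) => Phi k t (-z)) (fun _ => 1)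
        (nhdsWithin 0 (Set.Ioi 0)) (Metric.closedBall 0 R)) := by
  obtain ⟨hm, α, ε, hα0, hα1, hε, hfam⟩ := hk
  have hfamp : ∀ T : ℝ, 0 < T → ∃ K : ℝ, 0 < K ∧ VolterraAux.KH k α ε T K := by
    intro T hT
    obtain ⟨K, hK⟩ := hfam T hT
    have hK0 : 0 ≤ K := by refine le_trans ?_ (hK T hT le_rfl).2; positivity
    refine ⟨K+1, by linarith, ?_⟩
    intro u h1 h2
    exact ⟨(hK u h1 h2).1, (hK u h1 h2).2.trans (by linarith)⟩
  have hfam' : ∀ T : ℝ, 0 < T → ∃ K : ℝ, VolterraAux.KH k α ε T K := by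
    intro T hT
    obtain ⟨K, _, hK⟩ := hfamp T hT
    exact ⟨K, hK⟩
  have hPm : ∀ z : ℂ, Measurable fun t => Phi k t z := fun z =>
    VolterraAux.measurable_phi hm hα1 hε hfam' z
  have hbdd : ∀ T : ℝ, 0 < T → ∀ z : ℂ, ∃ M : ℝ, ∀ t ∈ Set.Icc (0:ℝ) T, ‖Phi k t z‖ ≤ M := by
    intro T hT z
    obtain ⟨K, hKpos, hK⟩ := hfamp T hT
    refine ⟨max 1 (∑' n, VolterraAux.Cs K ((1-α)*((1+ε)/ε)) ((1+ε)/ε) n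
      * (T ^ (1-α) * ‖z‖) ^ n), ?_⟩
    intro t htm
    by_cases ht : 0 < t
    · exact le_trans (VolterraAux.phi_norm_le hm hα1 hε hT hK hKpos z ht htm.2)
        (le_max_right _ _)
    · rw [VolterraAux.phi_nonpos ht]
      simpa using le_max_left (1:ℝ) _
  refine ⟨?_, ?_, ?_, ?_, ?_, ?_⟩
  · exact fun T hT => ⟨hPm (-lam), hbdd T hT (-lam)⟩
  · exact VolterraAux.phi_nonpos (by norm_num) (-lam)
  · intro t ht
    obtain ⟨K, hKpos, hK⟩ := hfamp t ht
    exact VolterraAux.phi_eq hm hα1 hε ht hK hKpos lam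
  · intro g hgT hg0 hgeq t ht0
    rcases eq_or_lt_of_le ht0 with h|h
    · rw [← h, hg0, VolterraAux.phi_nonpos (lt_irrefl 0)]
    · obtain ⟨K, hKpos, hK⟩ := hfamp t h
      obtain ⟨hgm, Mg, hMg⟩ := hgT t h
      obtain ⟨MP, hMP⟩ := hbdd t h (-lam)
      exact VolterraAux.unique_aux hm hα1 hε h hK hKpos lam hgm (hPm (-lam))
        (fun s hs => (norm_sub_le _ _).trans (add_le_add (hMg s hs) (hMP s hs)))
        hMg hMP hgeq
  · intro t ht z
    by_cases h : 0 < t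
    · obtain ⟨K, hKpos, hK⟩ := hfamp t h
      exact VolterraAux.summable_norm_of_pos hm hα1 hε h hK hKpos h le_rfl z
    · exact VolterraAux.summable_nonpos h z
  · intro R hR
    obtain ⟨K, hKpos, hK⟩ := hfamp 1 one_pos
    exact VolterraAux.unif_conv hm hα1 hε hK hKpos hR
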